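/- Let f : ℝⁿ → ℝ ∪ {∞} be lsc and prox-regular at x̄ ∈ dom f for x̄* ∈ ∂f(x̄), and let g : ℝⁿ → ℝ be twice continuously differentiable. Then f + g is prox-regular at x̄ for the subgradient x̄* + ∇g(x̄) ∈ ∂(f+g)(x̄). -/

import Mathlib

open scoped RealInnerProductSpace
open Filter Topology Metric Matrix

noncomputable section

abbrev En (n : ℕ) := EuclideanSpace ℝ (Fin n)

variable {n : ℕ}

/-- The regular (Fréchet) subdifferential of an extended-real-valued function. -/
def FSubdiff (f : En n → EReal) (x : En n) : Set (En n) :=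
  {v | ∀ c : ℝ, 0 < c → ∃ δ > (0:ℝ), ∀ y ∈ ball x δ,
    f x + ((⟪v, y - x⟫ - c * ‖y - x‖ : ℝ) : EReal) ≤ f y}

/-- The limiting (Mordukhovich) subdifferential, via f-attentive convergence. -/
def LSubdiff (f : En n → EReal) (x : En n) : Set (En n) :=
  {v | ∃ xs vs : ℕ → En n, (∀ k, vs k ∈ FSubdiff f (xs k)) ∧
    Tendsto xs atTop (𝓝 x) ∧ Tendsto (fun k => f (xs k)) atTop (𝓝 (f x)) ∧
    Tendsto vs atTop (𝓝 v)}

/-- The graph of the f-attentive ε-localization of the subdifferential around (x̄, x̄*). -/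
def GphT (f : En n → EReal) (xb xbs : En n) (ε : ℝ) : Set (En n × En n) :=
  {p | p.2 ∈ LSubdiff f p.1 ∧ f p.1 < f xb + (ε : EReal) ∧
       p.1 ∈ ball xb ε ∧ p.2 ∈ ball xbs ε}

/-- Prox-regularity of f at x̄ for x̄* with parameters r ≥ 0 and ε > 0. -/
def ProxReg (f : En n → EReal) (xb xbs : En n) (r ε : ℝ) : Prop :=
  (∃ a : ℝ, f xb = (a : EReal)) ∧ xbs ∈ LSubdiff f xb ∧ 0 ≤ r ∧ 0 < ε ∧
  ∀ x' ∈ ball xb ε, ∀ p ∈ GphT f xb xbs ε,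
    f p.1 + ((⟪p.2, x' - p.1⟫ - r / 2 * ‖x' - p.1‖ ^ 2 : ℝ) : EReal) ≤ f x'

/-! ### Auxiliary lemmas -/

lemma EReal.trichot (a : EReal) : a = ⊥ ∨ a = ⊤ ∨ ∃ b : ℝ, a = (b : EReal) := by
  induction a using EReal.rec with
  | bot => exact Or.inl rfl
  | coe b => exact Or.inr (Or.inr ⟨b, rfl⟩)
  | top => exact Or.inr (Or.inl rfl)

lemma FSubdiff_add {f : En n → EReal} {g : En n → ℝ} {x v G : En n}
    (hv : v ∈ FSubdiff f x) (hg : HasGradientAt g G x) :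
    v + G ∈ FSubdiff (fun y => f y + ((g y : ℝ) : EReal)) x := by
  intro c hc
  obtain ⟨δ₁, hδ₁, h₁⟩ := hv (c/2) (by linarith)
  have h₂ : ∀ᶠ y in 𝓝 x, |g y - g x - ⟪G, y - x⟫| ≤ (c/2) * ‖y - x‖ := by
    have := hg.hasFDerivAt.isLittleO.def (by linarith : (0:ℝ) < c/2)
    filter_upwards [this] with y hy
    simpa [Real.norm_eq_abs] using hy
  obtain ⟨δ₂, hδ₂, h₂'⟩ := Metric.eventually_nhds_iff_ball.mp h₂
  refine ⟨min δ₁ δ₂, lt_min hδ₁ hδ₂, fun y hy => ?_⟩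
  have hy₁ : y ∈ ball x δ₁ := ball_subset_ball (min_le_left _ _) hy
  have hy₂ : y ∈ ball x δ₂ := ball_subset_ball (min_le_right _ _) hy
  have key : f x + ((⟪v, y - x⟫ - c/2 * ‖y - x‖ : ℝ) : EReal)
      + ((g x + (⟪G, y - x⟫ - c/2 * ‖y - x‖) : ℝ) : EReal)
      ≤ f y + ((g y : ℝ) : EReal) := by
    refine add_le_add (h₁ y hy₁) ?_
    have h3 : |g y - g x - ⟪G, y - x⟫| ≤ c/2 * ‖y - x‖ := h₂' y hy₂
    rw [EReal.coe_le_coe_iff]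
    have := abs_le.mp h3
    linarith [this.1]
  calc f x + ((g x : ℝ) : EReal) + ((⟪v + G, y - x⟫ - c * ‖y - x‖ : ℝ) : EReal)
      = f x + ((⟪v, y - x⟫ - c/2 * ‖y - x‖ : ℝ) : EReal)
        + ((g x + (⟪G, y - x⟫ - c/2 * ‖y - x‖) : ℝ) : EReal) := by
        rw [add_assoc, add_assoc]
        congr 1
        rw [← EReal.coe_add, ← EReal.coe_add, inner_add_left]
        norm_cast
        ring
    _ ≤ f y + ((g y : ℝ) : EReal) := key

lemma tendsto_add_real {α : Type*} {l : Filter α} {u : α → EReal} {a : EReal}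
    {w : α → ℝ} {b : ℝ} (hu : Tendsto u l (𝓝 a)) (hw : Tendsto w l (𝓝 b)) :
    Tendsto (fun k => u k + ((w k : ℝ) : EReal)) l (𝓝 (a + (b : EReal))) := by
  have hco : Tendsto (fun k => ((w k : ℝ) : EReal)) l (𝓝 ((b : ℝ) : EReal)) :=
    (continuous_coe_real_ereal.tendsto _).comp hw
  have hcont : ContinuousAt (fun p : EReal × EReal => p.1 + p.2) (a, ((b:ℝ) : EReal)) :=
    EReal.continuousAt_add (Or.inr (EReal.coe_ne_bot b)) (Or.inr (EReal.coe_ne_top b))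
  exact hcont.tendsto.comp (hu.prodMk_nhds hco)

lemma LSubdiff_add {f : En n → EReal} {g : En n → ℝ} {x v : En n} {G : En n → En n}
    (hv : v ∈ LSubdiff f x) (hg : ∀ y, HasGradientAt g (G y) y) (hGc : Continuous G)
    (hgc : Continuous g) :
    v + G x ∈ LSubdiff (fun y => f y + ((g y : ℝ) : EReal)) x := by
  obtain ⟨xs, vs, hF, hx, hfx, hvs⟩ := hv
  refine ⟨xs, fun k => vs k + G (xs k), fun k => FSubdiff_add (hF k) (hg (xs k)), hx, ?_, ?_⟩
  · exact tendsto_add_real hfx ((hgc.tendsto _).comp hx)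
  · exact hvs.add ((hGc.tendsto _).comp hx)

lemma fadd_cancel (f : En n → EReal) (g : En n → ℝ) :
    (fun y => (f y + ((g y : ℝ) : EReal)) + (((-g) y : ℝ) : EReal)) = f := by
  funext y
  show f y + ((g y : ℝ) : EReal) + ((-(g y) : ℝ) : EReal) = f y
  rw [EReal.coe_neg, ← sub_eq_add_neg, EReal.add_sub_cancel_right]

lemma LSubdiff_sub {f : En n → EReal} {g : En n → ℝ} {x w : En n} {G : En n → En n}
    (hw : w ∈ LSubdiff (fun y => f y + ((g y : ℝ) : EReal)) x)
    (hg : ∀ y, HasGradientAt g (G y) y) (hGc : Continuous G) (hgc : Continuous g) :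
    w - G x ∈ LSubdiff f x := by
  have hneg : ∀ y, HasGradientAt (-g) ((-G) y) y := fun y => by
    rw [hasGradientAt_iff_hasFDerivAt]
    simpa [map_neg] using (hg y).hasFDerivAt.neg
  have := LSubdiff_add (f := fun y => f y + ((g y : ℝ) : EReal)) (g := -g)
    (G := -G) hw hneg hGc.neg hgc.neg
  rw [fadd_cancel f g] at this
  simpa [sub_eq_add_neg] using this

lemma inner_gradient_eq {g : En n → ℝ} (hdg : Differentiable ℝ g) (x v : En n) :
    ⟪gradient g x, v⟫ = fderiv ℝ g x v := by
  rw [(hdg x).hasGradientAt.hasFDerivAt.fderiv]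
  rfl

lemma quad_bound {g : En n → ℝ} (hdg : Differentiable ℝ g) {K : NNReal} {s : Set (En n)}
    (hconv : Convex ℝ s) (hlip : LipschitzOnWith K (fderiv ℝ g) s)
    {x x' : En n} (hx : x ∈ s) (hx' : x' ∈ s) :
    |g x' - g x - ⟪gradient g x, x' - x⟫| ≤ K * ‖x' - x‖ ^ 2 := by
  set φ : En n → ℝ := fun y => g y - (fderiv ℝ g x) y with hφ
  have hseg : segment ℝ x x' ⊆ s := hconv.segment_subset hx hx'
  have hbound : ∀ y ∈ segment ℝ x x', ‖y - x‖ ≤ ‖x' - x‖ := by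
    intro y hy
    rw [segment_eq_image'] at hy
    obtain ⟨t, ht, rfl⟩ := hy
    simp only [add_sub_cancel_left, norm_smul, Real.norm_eq_abs, abs_of_nonneg ht.1]
    nlinarith [norm_nonneg (x' - x), ht.2]
  have hder : ∀ y ∈ segment ℝ x x',
      HasFDerivWithinAt φ (fderiv ℝ g y - fderiv ℝ g x) (segment ℝ x x') y := fun y _ =>
    ((hdg y).hasFDerivAt.sub ((fderiv ℝ g x).hasFDerivAt)).hasFDerivWithinAt
  have hC : ∀ y ∈ segment ℝ x x', ‖fderiv ℝ g y - fderiv ℝ g x‖ ≤ K * ‖x' - x‖ := by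
    intro y hy
    calc ‖fderiv ℝ g y - fderiv ℝ g x‖ ≤ K * ‖y - x‖ := by
          have := hlip.norm_sub_le (hseg hy) hx
          simpa [dist_eq_norm] using this
      _ ≤ K * ‖x' - x‖ := mul_le_mul_of_nonneg_left (hbound y hy) K.coe_nonneg
  have hmain := (convex_segment x x').norm_image_sub_le_of_norm_hasFDerivWithin_le
    hder hC (left_mem_segment ℝ x x') (right_mem_segment ℝ x x')
  have h2 : φ x' - φ x = g x' - g x - ⟪gradient g x, x' - x⟫ := by
    simp only [hφ, inner_gradient_eq hdg, map_sub]
    ring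
  rw [h2, Real.norm_eq_abs] at hmain
  calc |g x' - g x - ⟪gradient g x, x' - x⟫| ≤ K * ‖x' - x‖ * ‖x' - x‖ := hmain
    _ = K * ‖x' - x‖ ^ 2 := by ring

theorem stmt19 (f : En n → EReal) (xb xbs : En n)
    (hlsc : LowerSemicontinuous f) (hfin : ∃ a : ℝ, f xb = (a : EReal))
    (hpr : ∃ r ε : ℝ, ProxReg f xb xbs r ε)
    (g : En n → ℝ) (hg : ContDiff ℝ 2 g) :
    ∃ r ε : ℝ, ProxReg (fun x => f x + ((g x : ℝ) : EReal)) xb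
      (xbs + gradient g xb) r ε := by
  obtain ⟨r, ε, hfa, hsub, hr, hε, hineq⟩ := hpr
  obtain ⟨a, ha⟩ := hfin
  set G : En n → En n := gradient g with hGdef
  have hdg : Differentiable ℝ g := hg.differentiable (by norm_num)
  have hGgrad : ∀ y, HasGradientAt g (G y) y := fun y => (hdg y).hasGradientAt
  have hGc : Continuous G := by
    have : G = fun x => (InnerProductSpace.toDual ℝ (En n)).symm (fderiv ℝ g x) := rfl
    rw [this]
    exact (InnerProductSpace.toDual ℝ (En n)).symm.continuous.comp
      (hg.continuous_fderiv (by norm_num))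
  -- Lipschitz constant for fderiv g (hence gradient) near xb
  have h1 : ContDiffAt ℝ 1 (fderiv ℝ g) xb :=
    (hg.fderiv_right (by norm_num : (1:WithTop ℕ∞) + 1 ≤ 2)).contDiffAt
  obtain ⟨K, t, ht, hlip0⟩ := h1.exists_lipschitzOnWith
  obtain ⟨ρ, hρ, hsubt⟩ := Metric.mem_nhds_iff.mp ht
  have hlip : LipschitzOnWith K (fderiv ℝ g) (ball xb ρ) := hlip0.mono hsubt
  have hliPG : LipschitzOnWith K G (ball xb ρ) := by
    have : G = fun x => (InnerProductSpace.toDual ℝ (En n)).symm (fderiv ℝ g x) := rfl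
    rw [this]
    have h := ((InnerProductSpace.toDual ℝ (En n)).symm.lipschitz.comp_lipschitzOnWith hlip)
    rw [one_mul] at h
    exact h
  -- continuity of g at xb
  obtain ⟨δg, hδg, hgball⟩ := Metric.continuousAt_iff.mp (hg.continuous.continuousAt (x := xb)) (ε/2)
    (by linarith)
  set ε' : ℝ := min (min (ρ/2) δg) (ε/(2*(1+(K:ℝ)))) with hε'def
  have hKpos : (0:ℝ) < 2*(1+(K:ℝ)) := by positivity
  have hε' : 0 < ε' := by
    refine lt_min (lt_min (by linarith) hδg) (by positivity)
  have hε'ρ : ε' < ρ := lt_of_le_of_lt ((min_le_left _ _).trans (min_le_left _ _)) (by linarith)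
  have hε'δg : ε' ≤ δg := (min_le_left _ _).trans (min_le_right _ _)
  have hε'K : ε' * (1+(K:ℝ)) ≤ ε/2 := by
    have h1' : ε' ≤ ε/(2*(1+(K:ℝ))) := min_le_right _ _
    have hK1 : (0:ℝ) < 1+(K:ℝ) := by positivity
    have h2' : ε/(2*(1+(K:ℝ))) * (1+(K:ℝ)) = ε/2 := by field_simp
    nlinarith
  have hε'ε2 : ε' ≤ ε/2 := by nlinarith [K.coe_nonneg]
  have hε'ε : ε' ≤ ε := by linarith
  refine ⟨r + 2*K, ε', ⟨a + g xb, by show f xb + ((g xb : ℝ) : EReal) = _; rw [ha]; norm_cast⟩,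
    LSubdiff_add hsub hGgrad hGc hg.continuous, by positivity, hε', ?_⟩
  intro x' hx' p hp
  obtain ⟨hpL, hpF, hpB1, hpB2⟩ := hp
  -- trichotomy on f p.1
  rcases EReal.trichot (f p.1) with hbot | htop | ⟨b, hb⟩
  · -- f p.1 = ⊥ : LHS is ⊥
    show f p.1 + ((g p.1 : ℝ) : EReal) + _ ≤ _
    rw [hbot, EReal.bot_add, EReal.bot_add]
    exact bot_le
  · -- f p.1 = ⊤ : contradicts hpF
    exfalso
    have : (fun x => f x + ((g x : ℝ) : EReal)) p.1 = ⊤ := by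
      simp [htop]
    rw [this] at hpF
    have : f xb + ((g xb : ℝ) : EReal) + ((ε' : ℝ) : EReal) < ⊤ := by
      rw [ha, ← EReal.coe_add, ← EReal.coe_add]
      exact EReal.coe_lt_top _
    exact absurd (hpF.trans this) (lt_irrefl _)
  -- main case: f p.1 = b
  have hp1ρ : p.1 ∈ ball xb ρ := ball_subset_ball hε'ρ.le hpB1
  have hx'ρ : x' ∈ ball xb ρ := ball_subset_ball hε'ρ.le hx'
  -- distance of gradients
  have hGdist : ‖G p.1 - G xb‖ ≤ (K:ℝ) * ε' := by
    have hxbρ : xb ∈ ball xb ρ := mem_ball_self (by linarith)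
    have := hliPG.norm_sub_le hp1ρ hxbρ
    have hd : ‖p.1 - xb‖ < ε' := by simpa [dist_eq_norm] using hpB1
    calc ‖G p.1 - G xb‖ ≤ (K:ℝ) * ‖p.1 - xb‖ := by simpa [dist_eq_norm] using this
      _ ≤ (K:ℝ) * ε' := mul_le_mul_of_nonneg_left hd.le K.coe_nonneg
  -- g values near xb
  have hgp1 : |g p.1 - g xb| < ε/2 := by
    have : dist p.1 xb < δg := lt_of_lt_of_le (mem_ball.mp hpB1) hε'δg
    simpa [Real.dist_eq] using hgball this
  -- the translated pair is in GphT f xb xbs ε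
  have hq : (p.1, p.2 - G p.1) ∈ GphT f xb xbs ε := by
    refine ⟨LSubdiff_sub hpL hGgrad hGc hg.continuous, ?_, ball_subset_ball hε'ε hpB1, ?_⟩
    · -- f p.1 < f xb + ε
      have hreal : b + g p.1 < a + g xb + ε' := by
        have : (fun x => f x + ((g x : ℝ) : EReal)) p.1
            < (fun x => f x + ((g x : ℝ) : EReal)) xb + ((ε' : ℝ) : EReal) := hpF
        simp only [hb, ha] at this
        norm_cast at this
      rw [hb, ha]
      norm_cast
      have := abs_le.mp hgp1.le
      linarith [this.2]
    · -- p.2 - G p.1 ∈ ball xbs ε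
      rw [mem_ball, dist_eq_norm]
      have h2 : ‖p.2 - (xbs + G xb)‖ < ε' := by simpa [dist_eq_norm] using hpB2
      calc ‖p.2 - G p.1 - xbs‖ = ‖(p.2 - (xbs + G xb)) + (G xb - G p.1)‖ := by
            congr 1; abel
        _ ≤ ‖p.2 - (xbs + G xb)‖ + ‖G xb - G p.1‖ := norm_add_le _ _
        _ < ε' + (K:ℝ) * ε' :=
            add_lt_add_of_lt_of_le h2 (by rw [norm_sub_rev]; exact hGdist)
        _ ≤ ε := by nlinarith [K.coe_nonneg, hε'.le]
  have hprox := hineq x' (ball_subset_ball hε'ε hx') (p.1, p.2 - G p.1) hq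
  simp only [hb] at hprox
  -- quadratic lower bound for g
  have hquad := quad_bound hdg (convex_ball xb ρ) hlip hp1ρ hx'ρ
  -- assemble
  show f p.1 + ((g p.1 : ℝ) : EReal)
      + ((⟪p.2, x' - p.1⟫ - (r + 2*(K:ℝ))/2 * ‖x' - p.1‖^2 : ℝ) : EReal)
      ≤ f x' + ((g x' : ℝ) : EReal)
  rw [hb]
  have hsplit : ⟪p.2, x' - p.1⟫ = ⟪p.2 - G p.1, x' - p.1⟫ + ⟪G p.1, x' - p.1⟫ := by
    rw [inner_sub_left]; ring
  have habs := abs_le.mp hquad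
  have hrle : b + g p.1 + (⟪p.2, x' - p.1⟫ - (r + 2*(K:ℝ))/2 * ‖x' - p.1‖^2)
      ≤ (b + (⟪p.2 - G p.1, x' - p.1⟫ - r/2 * ‖x' - p.1‖^2)) + g x' := by
    have h1' := habs.1
    nlinarith [h1']
  calc ((b : ℝ) : EReal) + ((g p.1 : ℝ) : EReal)
        + ((⟪p.2, x' - p.1⟫ - (r + 2*(K:ℝ))/2 * ‖x' - p.1‖^2 : ℝ) : EReal)
      = ((b + g p.1 + (⟪p.2, x' - p.1⟫ - (r + 2*(K:ℝ))/2 * ‖x' - p.1‖^2) : ℝ) : EReal) := by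
        norm_cast
    _ ≤ (((b + (⟪p.2 - G p.1, x' - p.1⟫ - r/2 * ‖x' - p.1‖^2)) + g x' : ℝ) : EReal) := by
        exact_mod_cast hrle
    _ = (((b : ℝ) : EReal) + ((⟪p.2 - G p.1, x' - p.1⟫ - r/2 * ‖x' - p.1‖^2 : ℝ) : EReal))
        + ((g x' : ℝ) : EReal) := by norm_cast
    _ ≤ f x' + ((g x' : ℝ) : EReal) := add_le_add hprox le_rfl
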